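/- arXiv:1412.3341 — 3 statements merged into one kernel-verified Lean document; each statement's English description precedes it below -/
import Mathlib

section
/- Let A and B be bases of a matroid M, and let B = B_1 ⊔ ... ⊔ B_k be a partition of B. Then there exists a partition A = A_1 ⊔ ... ⊔ A_k such that (A \ A_i) ∪ B_i is a basis of M for every 1 ≤ i ≤ k. -/
open Set

namespace PartExch


variable {α : Type*}

/-- An abstract rank-like function. -/
structure RkFn (f : Set α → ℕ) : Prop where
  empty : f ∅ = 0
  mono : ∀ ⦃X Y : Set α⦄, X ⊆ Y → f X ≤ f Y
  step : ∀ (X : Set α) (e : α), f (insert e X) ≤ f X + 1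
  submod : ∀ X Y : Set α, f (X ∪ Y) + f (X ∩ Y) ≤ f X + f Y

lemma RkFn.union_le {f : Set α → ℕ} (hf : RkFn f) {S : Set α} (hS : S.Finite) (T : Set α) :
    f (T ∪ S) ≤ f T + S.ncard := by
  induction S, hS using Set.Finite.induction_on with
  | empty => simpa using hf.mono (by simp)
  | @insert a s ha hs ih =>
      have h1 : T ∪ insert a s = insert a (T ∪ s) := by
        ext x; simp only [Set.mem_union, Set.mem_insert_iff]; tauto
      calc f (T ∪ insert a s) = f (insert a (T ∪ s)) := by rw [h1]
        _ ≤ f (T ∪ s) + 1 := hf.step _ _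
        _ ≤ f T + s.ncard + 1 := by omega
        _ = f T + (insert a s).ncard := by rw [Set.ncard_insert_of_notMem ha hs]; ring

lemma RkFn.singleton_le {f : Set α → ℕ} (hf : RkFn f) (e : α) : f {e} ≤ 1 := by
  have := hf.step ∅ e; simpa [hf.empty] using this

lemma RkFn.contract {f : Set α → ℕ} (hf : RkFn f) {e : α} (hfe : f {e} = 1) :
    RkFn (fun S => f (S ∪ {e}) - 1) := by
  have hb : ∀ S : Set α, 1 ≤ f (S ∪ {e}) := fun S => hfe ▸ hf.mono (by simp)
  constructor
  · show f (∅ ∪ {e}) - 1 = 0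
    rw [Set.empty_union, hfe]
  · intro X Y hXY
    show f (X ∪ {e}) - 1 ≤ f (Y ∪ {e}) - 1
    have := hf.mono (Set.union_subset_union_left {e} hXY)
    omega
  · intro X x
    show f (insert x X ∪ {e}) - 1 ≤ f (X ∪ {e}) - 1 + 1
    have h1 : insert x X ∪ {e} = insert x (X ∪ {e}) := by
      ext y; simp only [Set.mem_union, Set.mem_insert_iff, Set.mem_singleton_iff]; tauto
    have h2 := hf.step (X ∪ {e}) x
    have h3 := hb X
    rw [h1]; omega
  · intro X Y
    show f ((X ∪ Y) ∪ {e}) - 1 + (f ((X ∩ Y) ∪ {e}) - 1) ≤ f (X ∪ {e}) - 1 + (f (Y ∪ {e}) - 1)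
    have h1 : (X ∪ {e}) ∪ (Y ∪ {e}) = (X ∪ Y) ∪ {e} := by ext y; simp; tauto
    have h2 : (X ∪ {e}) ∩ (Y ∪ {e}) = (X ∩ Y) ∪ {e} := by ext y; simp; tauto
    have h3 := hf.submod (X ∪ {e}) (Y ∪ {e})
    rw [h1, h2] at h3
    have b1 := hb (X ∪ Y); have b2 := hb (X ∩ Y)
    omega

lemma minmax : ∀ (n : ℕ) (E : Set α), E.Finite → E.ncard ≤ n →
    ∀ (f g : Set α → ℕ), RkFn f → RkFn g →
    ∀ (k : ℕ), (∀ A ⊆ E, k ≤ f A + g (E \ A)) →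
    ∃ I, I ⊆ E ∧ f I = I.ncard ∧ g I = I.ncard ∧ k ≤ I.ncard := by
  intro n
  induction n with
  | zero =>
      intro E hE hn f g hf hg k hk
      have hE0 : E = ∅ := by rwa [← Set.ncard_eq_zero hE, ← Nat.le_zero]
      refine ⟨∅, by simp, by simp [hf.empty], by simp [hg.empty], ?_⟩
      have := hk ∅ (by simp)
      rw [hE0] at this
      simp only [Set.diff_empty, hE0, hf.empty, hg.empty] at this ⊢
      omega
  | succ n ih =>
      intro E hE hn f g hf hg k hk
      rcases Nat.eq_zero_or_pos k with hk0 | hkpos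
      · exact ⟨∅, by simp, by simp [hf.empty], by simp [hg.empty], by omega⟩
      rcases E.eq_empty_or_nonempty with hE0 | ⟨e, he⟩
      · have := hk ∅ (by simp)
        rw [hE0] at this
        simp only [Set.diff_empty, hf.empty, hg.empty] at this
        omega
      have hE' : (E \ {e}).Finite := hE.diff
      have hcard' : (E \ {e}).ncard ≤ n := by
        have := Set.ncard_diff_singleton_of_mem he
        omega
      by_cases hP1 : ∀ A ⊆ E \ {e}, k ≤ f A + g ((E \ {e}) \ A)
      · obtain ⟨I, hIE, hfI, hgI, hkI⟩ := ih (E \ {e}) hE' hcard' f g hf hg k hP1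
        exact ⟨I, hIE.trans diff_subset, hfI, hgI, hkI⟩
      push_neg at hP1
      obtain ⟨A₀, hA₀E, hA₀⟩ := hP1
      have heA₀ : e ∉ A₀ := fun h => (hA₀E h).2 rfl
      have hfe : f {e} = 1 := by
        rcases Nat.lt_or_ge (f {e}) 1 with h | h
        · exfalso
          have hsub := hf.submod A₀ {e}
          have hint : A₀ ∩ {e} = ∅ := by
            ext x; simp only [Set.mem_inter_iff, Set.mem_singleton_iff, Set.mem_empty_iff_false,
              iff_false, not_and]
            rintro hx rfl; exact heA₀ hx
          rw [hint, hf.empty] at hsub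
          have hkA := hk (A₀ ∪ {e}) (by
            intro x hx; rcases hx with hx | hx
            · exact (hA₀E hx).1
            · rw [Set.mem_singleton_iff] at hx; subst hx; exact he)
          have hEeq : E \ (A₀ ∪ {e}) = (E \ {e}) \ A₀ := by
            ext x
            simp only [Set.mem_diff, Set.mem_union, Set.mem_singleton_iff]
            tauto
          rw [hEeq] at hkA
          omega
        · have := hf.singleton_le e; omega
      have hge : g {e} = 1 := by
        rcases Nat.lt_or_ge (g {e}) 1 with h | h
        · exfalso
          have hkA := hk A₀ (fun x hx => (hA₀E hx).1)
          have hEeq : E \ A₀ = ((E \ {e}) \ A₀) ∪ {e} := by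
            ext x
            simp only [Set.mem_diff, Set.mem_union, Set.mem_singleton_iff]
            by_cases hxe : x = e
            · subst hxe; simp [he, heA₀]
            · tauto
          have hsub := hg.submod ((E \ {e}) \ A₀) {e}
          rw [← hEeq] at hsub
          have hb : g (E \ A₀ ∩ {e}) ≥ 0 := Nat.zero_le _
          omega
        · have := hg.singleton_le e; omega
      have hfb : ∀ S : Set α, 1 ≤ f (S ∪ {e}) := fun S => hfe ▸ hf.mono (by simp)
      have hgb : ∀ S : Set α, 1 ≤ g (S ∪ {e}) := fun S => hge ▸ hg.mono (by simp)
      by_cases hP2 : ∀ A ⊆ E \ {e}, k + 1 ≤ f (A ∪ {e}) + g (((E \ {e}) \ A) ∪ {e})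
      · -- contraction case
        have hk' : ∀ A ⊆ E \ {e},
            k - 1 ≤ (fun S => f (S ∪ {e}) - 1) A + (fun S => g (S ∪ {e}) - 1) ((E \ {e}) \ A) := by
          intro A hA
          have h1 := hP2 A hA
          have b1 := hfb A; have b2 := hgb ((E \ {e}) \ A)
          show k - 1 ≤ f (A ∪ {e}) - 1 + (g (((E \ {e}) \ A) ∪ {e}) - 1)
          omega
        obtain ⟨I', hI'E, hfI', hgI', hkI'⟩ := ih (E \ {e}) hE' hcard' _ _
          (hf.contract hfe) (hg.contract hge) (k-1) hk'
        have hfI'' : f (I' ∪ {e}) - 1 = I'.ncard := hfI'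
        have hgI'' : g (I' ∪ {e}) - 1 = I'.ncard := hgI'
        have heI' : e ∉ I' := fun h => (hI'E h).2 rfl
        have hI'fin : I'.Finite := hE'.subset hI'E
        have huI : insert e I' = I' ∪ {e} := by
          ext y; simp only [Set.mem_union, Set.mem_insert_iff, Set.mem_singleton_iff]; tauto
        have hcardI : (insert e I').ncard = I'.ncard + 1 :=
          Set.ncard_insert_of_notMem heI' hI'fin
        refine ⟨insert e I', ?_, ?_, ?_, ?_⟩
        · intro x hx; rcases hx with rfl | hx
          · exact he
          · exact (hI'E hx).1
        · rw [huI]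
          rw [huI] at hcardI
          rw [hcardI]; have := hfb I'; omega
        · rw [huI]
          rw [huI] at hcardI
          rw [hcardI]; have := hgb I'; omega
        · omega
      -- both fail: contradiction
      exfalso
      push_neg at hP2
      obtain ⟨B₀, hB₀E, hB₀⟩ := hP2
      have heB₀ : e ∉ B₀ := fun h => (hB₀E h).2 rfl
      have h1 := hk (A₀ ∩ B₀) (fun x hx => (hA₀E hx.1).1)
      have h2 := hk (A₀ ∪ B₀ ∪ {e}) (by
        intro x hx
        rcases hx with (hx | hx) | hx
        · exact (hA₀E hx).1
        · exact (hB₀E hx).1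
        · rw [Set.mem_singleton_iff] at hx; subst hx; exact he)
      have sf := hf.submod A₀ (B₀ ∪ {e})
      have e1 : A₀ ∪ (B₀ ∪ {e}) = A₀ ∪ B₀ ∪ {e} := (Set.union_assoc _ _ _).symm
      have e2 : A₀ ∩ (B₀ ∪ {e}) = A₀ ∩ B₀ := by
        ext x
        simp only [Set.mem_inter_iff, Set.mem_union, Set.mem_singleton_iff]
        by_cases hxe : x = e
        · subst hxe; simp [heA₀]
        · tauto
      rw [e1, e2] at sf
      have sg := hg.submod ((E \ {e}) \ A₀) (((E \ {e}) \ B₀) ∪ {e})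
      have e3 : ((E \ {e}) \ A₀) ∪ (((E \ {e}) \ B₀) ∪ {e}) = E \ (A₀ ∩ B₀) := by
        ext x
        simp only [Set.mem_union, Set.mem_diff, Set.mem_singleton_iff, Set.mem_inter_iff]
        by_cases hxe : x = e
        · subst hxe; simp [he, heA₀]
        · tauto
      have e4 : ((E \ {e}) \ A₀) ∩ (((E \ {e}) \ B₀) ∪ {e}) = E \ (A₀ ∪ B₀ ∪ {e}) := by
        ext x
        simp only [Set.mem_inter_iff, Set.mem_union, Set.mem_diff, Set.mem_singleton_iff]
        by_cases hxe : x = e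
        · subst hxe; simp
        · tauto
      rw [e3, e4] at sg
      omega



variable {α : Type*} {M : Matroid α} {I X Y B S : Set α}

noncomputable def mrk (M : Matroid α) (X : Set α) : ℕ :=
  (M.exists_isBasis (X ∩ M.E) inter_subset_right).choose.ncard

lemma mrk_basis (M : Matroid α) (X : Set α) :
    M.IsBasis (M.exists_isBasis (X ∩ M.E) inter_subset_right).choose (X ∩ M.E) :=
  (M.exists_isBasis (X ∩ M.E) inter_subset_right).choose_spec

lemma mrk_eq_of_basis (h : M.IsBasis I (X ∩ M.E)) : mrk M X = I.ncard := by
  have he := ((mrk_basis M X).isBase_restrict).encard_eq_encard_of_isBase h.isBase_restrict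
  rw [mrk, Set.ncard_def, Set.ncard_def, he]

lemma le_mrk (hfin : M.E.Finite) (hI : M.Indep I) (hIX : I ⊆ X) : I.ncard ≤ mrk M X := by
  obtain ⟨J, hJ, hIJ⟩ := hI.subset_isBasis_of_subset
    (subset_inter hIX hI.subset_ground) inter_subset_right
  rw [mrk_eq_of_basis hJ]
  exact Set.ncard_le_ncard hIJ (hfin.subset hJ.indep.subset_ground)

lemma mrk_spec (M : Matroid α) (X : Set α) :
    ∃ I, M.Indep I ∧ I ⊆ X ∧ I.ncard = mrk M X :=
  ⟨_, (mrk_basis M X).indep, (mrk_basis M X).subset.trans inter_subset_left, rfl⟩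

lemma mrk_mono (hfin : M.E.Finite) (h : X ⊆ Y) : mrk M X ≤ mrk M Y := by
  obtain ⟨I, hI, hIX, hcard⟩ := mrk_spec M X
  rw [← hcard]
  exact le_mrk hfin hI (hIX.trans h)

lemma mrk_indep (hI : M.Indep I) : mrk M I = I.ncard := by
  apply mrk_eq_of_basis
  rw [inter_eq_self_of_subset_left hI.subset_ground]
  exact hI.isBasis_self

lemma mrk_le_ncard (hfin : M.E.Finite) (hX : X.Finite) : mrk M X ≤ X.ncard := by
  obtain ⟨I, _, hIX, hcard⟩ := mrk_spec M X
  rw [← hcard]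
  exact Set.ncard_le_ncard hIX hX

lemma mrk_insert_le (hfin : M.E.Finite) (X : Set α) (e : α) :
    mrk M (insert e X) ≤ mrk M X + 1 := by
  obtain ⟨J, hJi, hJX, hcard⟩ := mrk_spec M (insert e X)
  have hJfin : J.Finite := hfin.subset hJi.subset_ground
  have h1 : J \ {e} ⊆ X := by
    intro x hx
    rcases hJX hx.1 with h | h
    · exact absurd h hx.2
    · exact h
  have h2 : (J \ {e}).ncard ≤ mrk M X := le_mrk hfin (hJi.subset diff_subset) h1
  by_cases he : e ∈ J
  · have := Set.ncard_diff_singleton_of_mem he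
    omega
  · rw [Set.diff_singleton_eq_self he] at h2
    omega

lemma mrk_submod (hfin : M.E.Finite) (X Y : Set α) :
    mrk M (X ∪ Y) + mrk M (X ∩ Y) ≤ mrk M X + mrk M Y := by
  have hI := mrk_basis M (X ∩ Y)
  set I := (M.exists_isBasis ((X ∩ Y) ∩ M.E) inter_subset_right).choose with hIdef
  have hIcard : mrk M (X ∩ Y) = I.ncard := rfl
  obtain ⟨J, hJ, hIJ⟩ := hI.indep.subset_isBasis_of_subset
    (hI.subset.trans (by intro x hx; exact ⟨Or.inl hx.1.1, hx.2⟩ : (X ∩ Y) ∩ M.E ⊆ (X ∪ Y) ∩ M.E))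
    inter_subset_right
  have hJcard : mrk M (X ∪ Y) = J.ncard := mrk_eq_of_basis hJ
  have hJfin : J.Finite := hfin.subset hJ.indep.subset_ground
  have hJX : (J ∩ X).ncard ≤ mrk M X := le_mrk hfin (hJ.indep.subset inter_subset_left)
    inter_subset_right
  have hJY : (J ∩ Y).ncard ≤ mrk M Y := le_mrk hfin (hJ.indep.subset inter_subset_left)
    inter_subset_right
  have hu : (J ∩ X) ∪ (J ∩ Y) = J := by
    ext x
    simp only [Set.mem_union, Set.mem_inter_iff]
    constructor
    · tauto
    · intro hx
      rcases (hJ.subset hx).1 with h | h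
      · exact Or.inl ⟨hx, h⟩
      · exact Or.inr ⟨hx, h⟩
  have hi : (J ∩ X) ∩ (J ∩ Y) = J ∩ (X ∩ Y) := by
    ext x; simp only [Set.mem_inter_iff]; tauto
  have hcc := Set.ncard_union_add_ncard_inter (J ∩ X) (J ∩ Y) (hJfin.subset inter_subset_left)
    (hJfin.subset inter_subset_left)
  rw [hu, hi] at hcc
  have hIJ2 : I ⊆ J ∩ (X ∩ Y) := subset_inter hIJ (hI.subset.trans inter_subset_left)
  have hIcard2 : I.ncard ≤ (J ∩ (X ∩ Y)).ncard :=
    Set.ncard_le_ncard hIJ2 (hJfin.subset inter_subset_left)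
  omega

lemma indep_of_mrk_eq (hfin : M.E.Finite) (hX : X ⊆ M.E) (h : mrk M X = X.ncard) :
    M.Indep X := by
  have hI := mrk_basis M X
  have hsub : (M.exists_isBasis (X ∩ M.E) inter_subset_right).choose ⊆ X :=
    hI.subset.trans inter_subset_left
  have heq : (M.exists_isBasis (X ∩ M.E) inter_subset_right).choose = X := by
    apply Set.eq_of_subset_of_ncard_le hsub _ (hfin.subset hX)
    rw [← h]
    exact le_of_eq rfl
  exact heq ▸ hI.indep

lemma mrk_ground_of_base (hB : M.IsBase B) : mrk M M.E = B.ncard := by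
  apply mrk_eq_of_basis
  rw [inter_self]
  exact hB.isBasis_ground

lemma base_of_indep_mrk (hfin : M.E.Finite) (hI : M.Indep S) (h : S.ncard = mrk M M.E) :
    M.IsBase S := by
  obtain ⟨B, hB, hSB⟩ := hI.exists_isBase_superset
  have hBfin : B.Finite := hfin.subset hB.subset_ground
  have : S = B := Set.eq_of_subset_of_ncard_le hSB (by rw [← mrk_ground_of_base hB] at *; omega) hBfin
  rw [this]; exact hB

lemma mrk_eq_rank_of_base_subset (hfin : M.E.Finite) (hB : M.IsBase B) (hBX : B ⊆ X)
    (hX : X ⊆ M.E) : mrk M X = mrk M M.E := by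
  apply le_antisymm (mrk_mono hfin hX)
  rw [mrk_ground_of_base hB]
  exact le_mrk hfin hB.indep hBX



lemma contract_rk (hfin : M.E.Finite) {K : Set α} (hK : M.Indep K) :
    RkFn (fun S => mrk M (S ∪ K) - K.ncard) := by
  have hb : ∀ S : Set α, K.ncard ≤ mrk M (S ∪ K) :=
    fun S => le_mrk hfin hK subset_union_right
  constructor
  · show mrk M (∅ ∪ K) - K.ncard = 0
    rw [Set.empty_union, mrk_indep hK]
    omega
  · intro X Y hXY
    show mrk M (X ∪ K) - K.ncard ≤ mrk M (Y ∪ K) - K.ncard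
    have := mrk_mono (M := M) hfin (Set.union_subset_union_left K hXY)
    omega
  · intro X e
    show mrk M (insert e X ∪ K) - K.ncard ≤ mrk M (X ∪ K) - K.ncard + 1
    have h1 : insert e X ∪ K = insert e (X ∪ K) := by
      ext y; simp only [Set.mem_union, Set.mem_insert_iff]; tauto
    have h2 := mrk_insert_le (M := M) hfin (X ∪ K) e
    have h3 := hb X
    rw [h1]
    omega
  · intro X Y
    show mrk M ((X ∪ Y) ∪ K) - K.ncard + (mrk M ((X ∩ Y) ∪ K) - K.ncard)
      ≤ mrk M (X ∪ K) - K.ncard + (mrk M (Y ∪ K) - K.ncard)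
    have h1 : (X ∪ K) ∪ (Y ∪ K) = (X ∪ Y) ∪ K := by
      ext y; simp only [Set.mem_union]; tauto
    have h2 : (X ∪ K) ∩ (Y ∪ K) = (X ∩ Y) ∪ K := by
      ext y; simp only [Set.mem_union, Set.mem_inter_iff]; tauto
    have h3 := mrk_submod (M := M) hfin (X ∪ K) (Y ∪ K)
    rw [h1, h2] at h3
    have b1 := hb (X ∪ Y); have b2 := hb (X ∩ Y)
    omega

lemma dualize_rk {g : Set α → ℕ} (hg : RkFn g) (D : Set α) (hD : D.Finite) :
    RkFn (fun S => (S ∩ D).ncard + g (D \ S) - g D) := by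
  have key : ∀ S : Set α, g D ≤ (S ∩ D).ncard + g (D \ S) := by
    intro S
    have hsub : D ⊆ (D \ S) ∪ (S ∩ D) := by
      intro x hx
      by_cases hxS : x ∈ S
      · exact Or.inr ⟨hxS, hx⟩
      · exact Or.inl ⟨hx, hxS⟩
    calc g D ≤ g ((D \ S) ∪ (S ∩ D)) := hg.mono hsub
      _ ≤ g (D \ S) + (S ∩ D).ncard := hg.union_le (hD.subset inter_subset_right) _
      _ = (S ∩ D).ncard + g (D \ S) := by ring
  constructor
  · show (∅ ∩ D).ncard + g (D \ ∅) - g D = 0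
    rw [Set.empty_inter, Set.diff_empty, Set.ncard_empty]
    omega
  · intro S T hST
    show (S ∩ D).ncard + g (D \ S) - g D ≤ (T ∩ D).ncard + g (D \ T) - g D
    have h1 : (S ∩ D) ⊆ (T ∩ D) := inter_subset_inter_left D hST
    have h2 : D \ S ⊆ (D \ T) ∪ ((T ∩ D) \ (S ∩ D)) := by
      intro x hx
      by_cases hxT : x ∈ T
      · exact Or.inr ⟨⟨hxT, hx.1⟩, fun h => hx.2 h.1⟩
      · exact Or.inl ⟨hx.1, hxT⟩
    have h3 : g (D \ S) ≤ g (D \ T) + ((T ∩ D) \ (S ∩ D)).ncard :=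
      (hg.mono h2).trans (hg.union_le ((hD.subset inter_subset_right).diff) _)
    have h4 : ((T ∩ D) \ (S ∩ D)).ncard = (T ∩ D).ncard - (S ∩ D).ncard :=
      Set.ncard_diff h1 (hD.subset inter_subset_right)
    have h5 : (S ∩ D).ncard ≤ (T ∩ D).ncard :=
      Set.ncard_le_ncard h1 (hD.subset inter_subset_right)
    have k1 := key S; have k2 := key T
    omega
  · intro S e
    show (insert e S ∩ D).ncard + g (D \ insert e S) - g D
      ≤ (S ∩ D).ncard + g (D \ S) - g D + 1
    have h1 : (insert e S ∩ D).ncard ≤ (S ∩ D).ncard + 1 := by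
      have hsub : insert e S ∩ D ⊆ insert e (S ∩ D) := by
        intro x hx; rcases hx.1 with rfl | h
        · exact Or.inl rfl
        · exact Or.inr ⟨h, hx.2⟩
      have := Set.ncard_insert_le e (S ∩ D)
      have h2 := Set.ncard_le_ncard hsub ((hD.subset inter_subset_right).insert e)
      omega
    have h2 : g (D \ insert e S) ≤ g (D \ S) :=
      hg.mono (Set.diff_subset_diff_right (Set.subset_insert e S))
    have k1 := key S; have k2 := key (insert e S)
    omega
  · intro S T
    show ((S ∪ T) ∩ D).ncard + g (D \ (S ∪ T)) - g D
        + (((S ∩ T) ∩ D).ncard + g (D \ (S ∩ T)) - g D)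
      ≤ ((S ∩ D).ncard + g (D \ S) - g D) + ((T ∩ D).ncard + g (D \ T) - g D)
    have e1 : (S ∩ D) ∪ (T ∩ D) = (S ∪ T) ∩ D := by
      ext x; simp only [Set.mem_union, Set.mem_inter_iff]; tauto
    have e2 : (S ∩ D) ∩ (T ∩ D) = (S ∩ T) ∩ D := by
      ext x; simp only [Set.mem_inter_iff]; tauto
    have hcc := Set.ncard_union_add_ncard_inter (S ∩ D) (T ∩ D)
      (hD.subset inter_subset_right) (hD.subset inter_subset_right)
    rw [e1, e2] at hcc
    have e3 : (D \ S) ∪ (D \ T) = D \ (S ∩ T) := by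
      ext x; simp only [Set.mem_union, Set.mem_diff, Set.mem_inter_iff]; tauto
    have e4 : (D \ S) ∩ (D \ T) = D \ (S ∪ T) := by
      ext x; simp only [Set.mem_union, Set.mem_diff, Set.mem_inter_iff]; tauto
    have hgg := hg.submod (D \ S) (D \ T)
    rw [e3, e4] at hgg
    have k1 := key S; have k2 := key T
    have k3 := key (S ∪ T); have k4 := key (S ∩ T)
    omega

lemma greene (M : Matroid α) (hfin : M.E.Finite) (D C B₁ B₂ : Set α)
    (hDC : Disjoint D C) (hDB₁ : Disjoint D B₁) (hDB₂ : Disjoint D B₂)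
    (hCB₁ : Disjoint C B₁) (hCB₂ : Disjoint C B₂) (hB₁₂ : Disjoint B₁ B₂)
    (hX : M.IsBase (D ∪ C)) (hY : M.IsBase ((B₁ ∪ B₂) ∪ C)) :
    ∃ I, I ⊆ D ∧ M.IsBase (I ∪ (C ∪ B₂)) ∧ M.IsBase ((D \ I) ∪ (C ∪ B₁)) := by
  -- ground subsets and finiteness
  have hDE : D ⊆ M.E := subset_union_left.trans hX.subset_ground
  have hCE : C ⊆ M.E := subset_union_right.trans hX.subset_ground
  have hB₁E : B₁ ⊆ M.E := (subset_union_left.trans subset_union_left).trans hY.subset_ground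
  have hB₂E : B₂ ⊆ M.E := (subset_union_right.trans subset_union_left).trans hY.subset_ground
  have hDfin : D.Finite := hfin.subset hDE
  have hCfin : C.Finite := hfin.subset hCE
  have hB₁fin : B₁.Finite := hfin.subset hB₁E
  have hB₂fin : B₂.Finite := hfin.subset hB₂E
  set r := mrk M M.E with hrdef
  -- independence of the two context sets
  have hK₁i : M.Indep (C ∪ B₁) := hY.indep.subset (by
    intro x hx; rcases hx with h | h
    · exact Or.inr h
    · exact Or.inl (Or.inl h))
  have hK₂i : M.Indep (C ∪ B₂) := hY.indep.subset (by
    intro x hx; rcases hx with h | h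
    · exact Or.inr h
    · exact Or.inl (Or.inr h))
  have cK₁ : (C ∪ B₁).ncard = C.ncard + B₁.ncard := Set.ncard_union_eq hCB₁ hCfin hB₁fin
  have cK₂ : (C ∪ B₂).ncard = C.ncard + B₂.ncard := Set.ncard_union_eq hCB₂ hCfin hB₂fin
  have hXcard : D.ncard + C.ncard = r := by
    rw [hrdef, mrk_ground_of_base hX, Set.ncard_union_eq hDC hDfin hCfin]
  have hYcard : B₁.ncard + B₂.ncard + C.ncard = r := by
    rw [hrdef, mrk_ground_of_base hY,
      Set.ncard_union_eq (Set.disjoint_union_left.mpr ⟨hCB₁.symm, hCB₂.symm⟩)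
        (hB₁fin.union hB₂fin) hCfin,
      Set.ncard_union_eq hB₁₂ hB₁fin hB₂fin]
  -- the two rank-like functions
  have hf : RkFn (fun S => mrk M (S ∪ (C ∪ B₂)) - (C ∪ B₂).ncard) := contract_rk hfin hK₂i
  have hg : RkFn (fun S => mrk M (S ∪ (C ∪ B₁)) - (C ∪ B₁).ncard) := contract_rk hfin hK₁i
  have hG : RkFn (fun S => (S ∩ D).ncard +
      (fun S => mrk M (S ∪ (C ∪ B₁)) - (C ∪ B₁).ncard) (D \ S) -
      (fun S => mrk M (S ∪ (C ∪ B₁)) - (C ∪ B₁).ncard) D) := dualize_rk hg D hDfin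
  -- value of g D
  have hgD : mrk M (D ∪ (C ∪ B₁)) = r := by
    rw [hrdef]
    exact mrk_eq_rank_of_base_subset hfin hX
      (by intro x hx; rcases hx with h | h
          · exact Or.inl h
          · exact Or.inr (Or.inl h))
      (Set.union_subset hDE (Set.union_subset hCE hB₁E))
  have hbK₁ : ∀ S : Set α, (C ∪ B₁).ncard ≤ mrk M (S ∪ (C ∪ B₁)) :=
    fun S => le_mrk hfin hK₁i subset_union_right
  have hbK₂ : ∀ S : Set α, (C ∪ B₂).ncard ≤ mrk M (S ∪ (C ∪ B₂)) :=
    fun S => le_mrk hfin hK₂i subset_union_right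
  -- the min-max hypothesis
  have hyp : ∀ A ⊆ D, B₁.ncard ≤
      (fun S => mrk M (S ∪ (C ∪ B₂)) - (C ∪ B₂).ncard) A +
      (fun S => (S ∩ D).ncard +
        (fun S => mrk M (S ∪ (C ∪ B₁)) - (C ∪ B₁).ncard) (D \ S) -
        (fun S => mrk M (S ∪ (C ∪ B₁)) - (C ∪ B₁).ncard) D) (D \ A) := by
    intro A hA
    show B₁.ncard ≤ (mrk M (A ∪ (C ∪ B₂)) - (C ∪ B₂).ncard) +
      (((D \ A) ∩ D).ncard + (mrk M ((D \ (D \ A)) ∪ (C ∪ B₁)) - (C ∪ B₁).ncard) -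
        (mrk M (D ∪ (C ∪ B₁)) - (C ∪ B₁).ncard))
    have hAfin : A.Finite := hDfin.subset hA
    rw [Set.diff_diff_cancel_left hA, Set.inter_eq_self_of_subset_left Set.diff_subset]
    have hADiff : (D \ A).ncard = D.ncard - A.ncard := Set.ncard_diff hA hAfin
    have hAcard : A.ncard ≤ D.ncard := Set.ncard_le_ncard hA hDfin
    -- submodularity instance
    have idU : (A ∪ (C ∪ B₂)) ∪ (A ∪ (C ∪ B₁)) = A ∪ ((B₁ ∪ B₂) ∪ C) := by
      ext x; simp only [Set.mem_union]; tauto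
    have idI : (A ∪ (C ∪ B₂)) ∩ (A ∪ (C ∪ B₁)) = A ∪ C := by
      have hd1 : ∀ x, x ∈ B₂ → x ∈ B₁ → False := fun x h2 h1 =>
        Set.disjoint_left.mp hB₁₂ h1 h2
      have hd2 : ∀ x, x ∈ C → x ∈ B₁ → False := fun x h2 h1 =>
        Set.disjoint_left.mp hCB₁ h2 h1
      have hd3 : ∀ x, x ∈ C → x ∈ B₂ → False := fun x h2 h1 =>
        Set.disjoint_left.mp hCB₂ h2 h1
      ext x
      simp only [Set.mem_union, Set.mem_inter_iff]
      constructor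
      · rintro ⟨h1 | h1, h2 | h2⟩
        · exact Or.inl h1
        · exact Or.inl h1
        · exact Or.inl h2
        · rcases h1 with h1 | h1
          · exact Or.inr h1
          · rcases h2 with h2 | h2
            · exact Or.inr h2
            · exact absurd h1 (fun h => hd1 x h h2)
      · rintro (h | h)
        · exact ⟨Or.inl h, Or.inl h⟩
        · exact ⟨Or.inr (Or.inl h), Or.inr (Or.inl h)⟩
    have hsm := mrk_submod (M := M) hfin (A ∪ (C ∪ B₂)) (A ∪ (C ∪ B₁))
    rw [idU, idI] at hsm
    have hAT : mrk M (A ∪ ((B₁ ∪ B₂) ∪ C)) = r := by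
      rw [hrdef]
      exact mrk_eq_rank_of_base_subset hfin hY subset_union_right
        (Set.union_subset (hA.trans hDE) hY.subset_ground)
    have hAC : mrk M (A ∪ C) = A.ncard + C.ncard := by
      have hACi : M.Indep (A ∪ C) := hX.indep.subset (Set.union_subset_union_left C hA)
      rw [mrk_indep hACi, Set.ncard_union_eq (hDC.mono_left hA) hAfin hCfin]
    have b1 := hbK₁ A; have b2 := hbK₂ A; have b3 := hbK₁ D
    omega
  -- apply the min-max theorem
  obtain ⟨I, hID, hfI, hGI, hkI⟩ := minmax D.ncard D hDfin le_rfl _ _ hf hG B₁.ncard hyp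
  have hfI' : mrk M (I ∪ (C ∪ B₂)) - (C ∪ B₂).ncard = I.ncard := hfI
  have hGI' : (I ∩ D).ncard + (mrk M ((D \ I) ∪ (C ∪ B₁)) - (C ∪ B₁).ncard) -
      (mrk M (D ∪ (C ∪ B₁)) - (C ∪ B₁).ncard) = I.ncard := hGI
  rw [Set.inter_eq_self_of_subset_left hID] at hGI'
  have hIfin : I.Finite := hDfin.subset hID
  have hIE : I ⊆ M.E := hID.trans hDE
  -- derive the numbers
  have b1 := hbK₂ I; have b2 := hbK₁ (D \ I); have b3 := hbK₁ D
  have hup : mrk M (I ∪ (C ∪ B₂)) ≤ r := by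
    rw [hrdef]
    exact mrk_mono hfin (Set.union_subset hIE (Set.union_subset hCE hB₂E))
  have hIcard : I.ncard = B₁.ncard := by omega
  have hmf : mrk M (I ∪ (C ∪ B₂)) = I.ncard + (C ∪ B₂).ncard := by omega
  have hmono : mrk M ((D \ I) ∪ (C ∪ B₁)) ≤ mrk M (D ∪ (C ∪ B₁)) :=
    mrk_mono hfin (Set.union_subset_union_left _ Set.diff_subset)
  have hlowsub : D ∪ (C ∪ B₁) ⊆ ((D \ I) ∪ (C ∪ B₁)) ∪ I := by
    intro x hx
    rcases hx with hx | hx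
    · by_cases hxI : x ∈ I
      · exact Or.inr hxI
      · exact Or.inl (Or.inl ⟨hx, hxI⟩)
    · exact Or.inl (Or.inr hx)
  have hmrkfn : RkFn (fun X => mrk M X) := by
    constructor
    · show mrk M ∅ = 0
      rw [mrk_indep M.empty_indep, Set.ncard_empty]
    · exact fun X Y h => mrk_mono hfin h
    · exact fun X e => mrk_insert_le hfin X e
    · exact fun X Y => mrk_submod hfin X Y
  have hlow : mrk M (D ∪ (C ∪ B₁)) ≤ mrk M ((D \ I) ∪ (C ∪ B₁)) + I.ncard := by
    have h1 := mrk_mono (M := M) hfin hlowsub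
    have h2 := hmrkfn.union_le hIfin ((D \ I) ∪ (C ∪ B₁))
    exact h1.trans h2
  have hmg : mrk M ((D \ I) ∪ (C ∪ B₁)) = r := by omega
  have hDIcard : (D \ I).ncard = D.ncard - I.ncard := Set.ncard_diff hID hIfin
  -- first base
  have hS₂fin : (I ∪ (C ∪ B₂)).Finite := hIfin.union (hCfin.union hB₂fin)
  have hS₂E : I ∪ (C ∪ B₂) ⊆ M.E := Set.union_subset hIE (Set.union_subset hCE hB₂E)
  have hS₂le : (I ∪ (C ∪ B₂)).ncard ≤ I.ncard + (C ∪ B₂).ncard := Set.ncard_union_le _ _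
  have hS₂rk : mrk M (I ∪ (C ∪ B₂)) ≤ (I ∪ (C ∪ B₂)).ncard := mrk_le_ncard hfin hS₂fin
  have hS₂card : (I ∪ (C ∪ B₂)).ncard = mrk M (I ∪ (C ∪ B₂)) := by omega
  have hS₂indep : M.Indep (I ∪ (C ∪ B₂)) := indep_of_mrk_eq hfin hS₂E hS₂card.symm
  have hS₂base : M.IsBase (I ∪ (C ∪ B₂)) := by
    apply base_of_indep_mrk hfin hS₂indep
    rw [← hrdef]
    omega
  -- second base
  have hS₁fin : ((D \ I) ∪ (C ∪ B₁)).Finite := hDfin.diff.union (hCfin.union hB₁fin)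
  have hS₁E : (D \ I) ∪ (C ∪ B₁) ⊆ M.E :=
    Set.union_subset (Set.diff_subset.trans hDE) (Set.union_subset hCE hB₁E)
  have hS₁le : ((D \ I) ∪ (C ∪ B₁)).ncard ≤ (D \ I).ncard + (C ∪ B₁).ncard :=
    Set.ncard_union_le _ _
  have hS₁rk : mrk M ((D \ I) ∪ (C ∪ B₁)) ≤ ((D \ I) ∪ (C ∪ B₁)).ncard :=
    mrk_le_ncard hfin hS₁fin
  have hS₁card : ((D \ I) ∪ (C ∪ B₁)).ncard = mrk M ((D \ I) ∪ (C ∪ B₁)) := by omega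
  have hS₁indep : M.Indep ((D \ I) ∪ (C ∪ B₁)) := indep_of_mrk_eq hfin hS₁E hS₁card.symm
  have hS₁base : M.IsBase ((D \ I) ∪ (C ∪ B₁)) := by
    apply base_of_indep_mrk hfin hS₁indep
    rw [← hrdef]
    omega
  exact ⟨I, hID, hS₂base, hS₁base⟩

lemma main_aux (M : Matroid α) (hfin : M.E.Finite) :
    ∀ (k : ℕ) (A B C : Set α) (Bp : Fin k → Set α),
      M.IsBase (A ∪ C) → M.IsBase (B ∪ C) →
      Disjoint A B → Disjoint A C → Disjoint B C →
      (∀ i j, i ≠ j → Disjoint (Bp i) (Bp j)) → (⋃ i, Bp i) = B →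
      ∃ Ap : Fin k → Set α, (∀ i, Ap i ⊆ A) ∧ (∀ i j, i ≠ j → Disjoint (Ap i) (Ap j)) ∧
        (⋃ i, Ap i) = A ∧ ∀ i, M.IsBase (((A \ Ap i) ∪ Bp i) ∪ C) := by
  intro k
  induction k with
  | zero =>
      intro A B C Bp hAC hBC hAB hACd hBCd hd hu
      have hB : B = ∅ := by rw [← hu]; exact Set.iUnion_of_empty _
      rw [hB, Set.empty_union] at hBC
      have hCeq : C = A ∪ C := hBC.eq_of_subset_isBase hAC subset_union_right
      have hA : A = ∅ := by
        rw [← Set.subset_empty_iff]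
        intro x hx
        exact absurd (hCeq ▸ Or.inl hx : x ∈ C) (fun h => hACd.ne_of_mem hx h rfl)
      refine ⟨fun i => i.elim0, fun i => i.elim0, fun i => i.elim0, ?_, fun i => i.elim0⟩
      rw [hA]; exact Set.iUnion_of_empty _
  | succ k ih =>
      intro A B C Bp hAC hBC hAB hACd hBCd hd hu
      have hBpsub : ∀ i, Bp i ⊆ B := fun i => hu ▸ Set.subset_iUnion Bp i
      set B' : Set α := ⋃ i : Fin k, Bp i.castSucc with hB'def
      have hB'sub : B' ⊆ B := Set.iUnion_subset fun i => hBpsub _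
      have hBsplit : B = B' ∪ Bp (Fin.last k) := by
        rw [← hu]
        ext x
        simp only [Set.mem_iUnion, Set.mem_union, hB'def]
        constructor
        · rintro ⟨i, hi⟩
          rcases Fin.eq_castSucc_or_eq_last i with ⟨j, rfl⟩ | rfl
          · exact Or.inl ⟨j, hi⟩
          · exact Or.inr hi
        · rintro (⟨j, hj⟩ | h)
          · exact ⟨j.castSucc, hj⟩
          · exact ⟨Fin.last k, h⟩
      have hB'last : Disjoint B' (Bp (Fin.last k)) := by
        rw [Set.disjoint_left]
        intro x hx hx'
        obtain ⟨i, hi⟩ := Set.mem_iUnion.mp hx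
        exact Set.disjoint_left.mp (hd _ _ (Fin.castSucc_lt_last i).ne) hi hx'
      obtain ⟨I, hID, hbase2, hbase1⟩ := greene M hfin A C B' (Bp (Fin.last k))
        hACd (hAB.mono_right hB'sub) (hAB.mono_right (hBpsub _))
        (hBCd.symm.mono_right hB'sub) (hBCd.symm.mono_right (hBpsub _)) hB'last
        hAC (hBsplit ▸ hBC)
      -- recursive call on I with contracted context C ∪ (A \ I)
      have hIA : I ⊆ A := hID
      have e1 : I ∪ (C ∪ (A \ I)) = A ∪ C := by
        ext x
        simp only [Set.mem_union, Set.mem_diff]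
        constructor
        · rintro (h | h | h)
          · exact Or.inl (hIA h)
          · exact Or.inr h
          · exact Or.inl h.1
        · rintro (h | h)
          · by_cases hxI : x ∈ I
            · exact Or.inl hxI
            · exact Or.inr (Or.inr ⟨h, hxI⟩)
          · exact Or.inr (Or.inl h)
      have e2 : B' ∪ (C ∪ (A \ I)) = (A \ I) ∪ (C ∪ B') := by
        ext x; simp only [Set.mem_union]; tauto
      obtain ⟨Ap', hsub', hdisj', hU', hbases'⟩ := ih I B' (C ∪ (A \ I))
        (fun i => Bp i.castSucc)
        (e1 ▸ hAC) (e2 ▸ hbase1)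
        ((hAB.mono_left hIA).mono_right hB'sub)
        (Set.disjoint_union_right.mpr ⟨hACd.mono_left hIA, Set.disjoint_sdiff_left.symm⟩)
        (Set.disjoint_union_right.mpr ⟨hBCd.mono_left hB'sub,
          ((hAB.mono_right hB'sub).symm.mono_right Set.diff_subset)⟩)
        (fun i j hij => hd _ _ (fun h => hij (Fin.castSucc_injective k h)))
        rfl
      refine ⟨fun i => Fin.lastCases (A \ I) Ap' i, ?_, ?_, ?_, ?_⟩
      · intro i
        rcases Fin.eq_castSucc_or_eq_last i with ⟨j, rfl⟩ | rfl
        · simp only [Fin.lastCases_castSucc]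
          exact (hsub' j).trans hIA
        · simp only [Fin.lastCases_last]
          exact Set.diff_subset
      · intro i j hij
        rcases Fin.eq_castSucc_or_eq_last i with ⟨i', rfl⟩ | rfl <;>
          rcases Fin.eq_castSucc_or_eq_last j with ⟨j', rfl⟩ | rfl
        · simp only [Fin.lastCases_castSucc]
          exact hdisj' _ _ (fun h => hij (by rw [h]))
        · simp only [Fin.lastCases_castSucc, Fin.lastCases_last]
          exact (Set.disjoint_sdiff_left.mono_right (hsub' i')).symm
        · simp only [Fin.lastCases_castSucc, Fin.lastCases_last]
          exact Set.disjoint_sdiff_left.mono_right (hsub' j')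
        · exact absurd rfl hij
      · ext x
        simp only [Set.mem_iUnion]
        constructor
        · rintro ⟨i, hi⟩
          rcases Fin.eq_castSucc_or_eq_last i with ⟨j, rfl⟩ | rfl
          · simp only [Fin.lastCases_castSucc] at hi
            exact hIA (hU' ▸ Set.mem_iUnion.mpr ⟨j, hi⟩)
          · simp only [Fin.lastCases_last] at hi
            exact hi.1
        · intro hx
          by_cases hxI : x ∈ I
          · rw [← hU'] at hxI
            obtain ⟨j, hj⟩ := Set.mem_iUnion.mp hxI
            exact ⟨j.castSucc, by simp only [Fin.lastCases_castSucc]; exact hj⟩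
          · exact ⟨Fin.last k, by simp only [Fin.lastCases_last]; exact ⟨hx, hxI⟩⟩
      · intro i
        rcases Fin.eq_castSucc_or_eq_last i with ⟨j, rfl⟩ | rfl
        · simp only [Fin.lastCases_castSucc]
          have hAp'j := hsub' j
          have e3 : ((A \ Ap' j) ∪ Bp j.castSucc) ∪ C
              = ((I \ Ap' j) ∪ Bp j.castSucc) ∪ (C ∪ (A \ I)) := by
            ext x
            simp only [Set.mem_union, Set.mem_diff]
            constructor
            · rintro ((⟨hxA, hxAp⟩ | h) | h)
              · by_cases hxI : x ∈ I
                · exact Or.inl (Or.inl ⟨hxI, hxAp⟩)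
                · exact Or.inr (Or.inr ⟨hxA, hxI⟩)
              · exact Or.inl (Or.inr h)
              · exact Or.inr (Or.inl h)
            · rintro ((⟨hxI, hxAp⟩ | h) | h | ⟨hxA, hxI⟩)
              · exact Or.inl (Or.inl ⟨hIA hxI, hxAp⟩)
              · exact Or.inl (Or.inr h)
              · exact Or.inr h
              · exact Or.inl (Or.inl ⟨hxA, fun hc => hxI (hAp'j hc)⟩)
          rw [e3]
          exact hbases' j
        · simp only [Fin.lastCases_last]
          have e4 : ((A \ (A \ I)) ∪ Bp (Fin.last k)) ∪ C = I ∪ (C ∪ Bp (Fin.last k)) := by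
            rw [Set.diff_diff_cancel_left hIA]
            ext x; simp only [Set.mem_union]; tauto
          rw [e4]
          exact hbase2

lemma main_aux2 (M : Matroid α) (hfin : M.E.Finite) :
    ∀ (n k : ℕ) (A B C : Set α) (Bp : Fin k → Set α),
      (A ∩ B).ncard ≤ n →
      M.IsBase (A ∪ C) → M.IsBase (B ∪ C) →
      Disjoint A C → Disjoint B C →
      (∀ i j, i ≠ j → Disjoint (Bp i) (Bp j)) → (⋃ i, Bp i) = B →
      ∃ Ap : Fin k → Set α, (∀ i j, i ≠ j → Disjoint (Ap i) (Ap j)) ∧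
        (⋃ i, Ap i) = A ∧ ∀ i, M.IsBase (((A \ Ap i) ∪ Bp i) ∪ C) := by
  intro n
  induction n with
  | zero =>
      intro k A B C Bp hn hAC hBC hACd hBCd hd hu
      have hABfin : (A ∩ B).Finite :=
        hfin.subset (Set.inter_subset_left.trans (subset_union_left.trans hAC.subset_ground))
      have hAB : Disjoint A B := by
        rw [Set.disjoint_iff_inter_eq_empty]
        rw [← Set.ncard_eq_zero hABfin]
        omega
      obtain ⟨Ap, _, h2, h3, h4⟩ := main_aux M hfin k A B C Bp hAC hBC hAB hACd hBCd hd hu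
      exact ⟨Ap, h2, h3, h4⟩
  | succ n ih =>
      intro k A B C Bp hn hAC hBC hACd hBCd hd hu
      rcases (A ∩ B).eq_empty_or_nonempty with hAB0 | ⟨e, heAB⟩
      · obtain ⟨Ap, _, h2, h3, h4⟩ := main_aux M hfin k A B C Bp hAC hBC
          (Set.disjoint_iff_inter_eq_empty.mpr hAB0) hACd hBCd hd hu
        exact ⟨Ap, h2, h3, h4⟩
      have heA : e ∈ A := heAB.1
      have heB : e ∈ B := heAB.2
      obtain ⟨j, hej⟩ := Set.mem_iUnion.mp (hu ▸ heB : e ∈ ⋃ i, Bp i)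
      have hABfin : (A ∩ B).Finite :=
        hfin.subset (Set.inter_subset_left.trans (subset_union_left.trans hAC.subset_ground))
      -- recursive instance
      have e1 : (A \ {e}) ∪ insert e C = A ∪ C := by
        ext x
        simp only [Set.mem_union, Set.mem_diff, Set.mem_insert_iff, Set.mem_singleton_iff]
        by_cases hxe : x = e
        · subst hxe; simp [heA]
        · tauto
      have e2 : (B \ {e}) ∪ insert e C = B ∪ C := by
        ext x
        simp only [Set.mem_union, Set.mem_diff, Set.mem_insert_iff, Set.mem_singleton_iff]
        by_cases hxe : x = e
        · subst hxe; simp [heB]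
        · tauto
      have e3 : ((A \ {e}) ∩ (B \ {e})) = (A ∩ B) \ {e} := by
        ext x; simp only [Set.mem_inter_iff, Set.mem_diff]; tauto
      have hmeas : ((A \ {e}) ∩ (B \ {e})).ncard ≤ n := by
        rw [e3]
        have h1 := Set.ncard_diff_singleton_of_mem heAB
        omega
      obtain ⟨Ap', hdisj', hU', hbases'⟩ := ih k (A \ {e}) (B \ {e}) (insert e C)
        (fun i => Bp i \ {e}) hmeas (e1 ▸ hAC) (e2 ▸ hBC)
        (by
          rw [Set.disjoint_left]
          rintro x ⟨hxA, hxe⟩ (rfl | hxC)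
          · exact hxe rfl
          · exact Set.disjoint_left.mp hACd hxA hxC)
        (by
          rw [Set.disjoint_left]
          rintro x ⟨hxB, hxe⟩ (rfl | hxC)
          · exact hxe rfl
          · exact Set.disjoint_left.mp hBCd hxB hxC)
        (fun i j hij => (hd i j hij).mono Set.diff_subset Set.diff_subset)
        (by rw [← Set.iUnion_diff, hu])
      have hsub' : ∀ i, Ap' i ⊆ A \ {e} := fun i => hU' ▸ Set.subset_iUnion Ap' i
      have heAp' : ∀ i, e ∉ Ap' i := fun i h => (hsub' i h).2 rfl
      set F : Fin k → Set α := fun i => if i = j then insert e (Ap' j) else Ap' i with hFdef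
      have hFj : F j = insert e (Ap' j) := if_pos rfl
      have hFne : ∀ i, i ≠ j → F i = Ap' i := fun i h => if_neg h
      refine ⟨F, ?_, ?_, ?_⟩
      · intro i i' hii'
        by_cases hi : i = j <;> by_cases hi' : i' = j
        · exact absurd (hi.trans hi'.symm) hii'
        · rw [hi, hFj, hFne i' hi']
          rw [Set.disjoint_left]
          rintro x (rfl | hx) hx'
          · exact heAp' i' hx'
          · exact Set.disjoint_left.mp (hdisj' j i' (fun h => hii' ((hi.trans h).trans rfl))) hx hx'
        · rw [hi', hFj, hFne i hi]
          rw [Set.disjoint_left]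
          rintro x hx (rfl | hx')
          · exact heAp' i hx
          · exact Set.disjoint_left.mp (hdisj' i j hi) hx hx'
        · rw [hFne i hi, hFne i' hi']
          exact hdisj' i i' hii'
      · ext x
        simp only [Set.mem_iUnion]
        constructor
        · rintro ⟨i, hi⟩
          by_cases hij' : i = j
          · rw [hij', hFj] at hi
            rcases hi with rfl | hi
            · exact heA
            · exact (hsub' j hi).1
          · rw [hFne i hij'] at hi
            exact (hsub' i hi).1
        · intro hx
          by_cases hxe : x = e
          · exact ⟨j, by rw [hFj]; exact Or.inl hxe⟩
          · have hxA : x ∈ A \ {e} := ⟨hx, hxe⟩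
            rw [← hU'] at hxA
            obtain ⟨i, hi⟩ := Set.mem_iUnion.mp hxA
            by_cases hij' : i = j
            · exact ⟨j, by rw [hFj]; exact Or.inr (hij' ▸ hi)⟩
            · exact ⟨i, by rw [hFne i hij']; exact hi⟩
      · intro i
        by_cases hij' : i = j
        · subst hij'
          rw [hFj]
          have e4 : ((A \ insert e (Ap' i)) ∪ Bp i) ∪ C
              = (((A \ {e}) \ Ap' i) ∪ (Bp i \ {e})) ∪ insert e C := by
            ext x
            simp only [Set.mem_union, Set.mem_diff, Set.mem_insert_iff, Set.mem_singleton_iff]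
            by_cases hxe : x = e
            · subst hxe; simp [hej]
            · tauto
          rw [e4]
          exact hbases' i
        · rw [hFne i hij']
          have heBpi : e ∉ Bp i := fun h =>
            Set.disjoint_left.mp (hd i j hij') h hej
          have e4 : ((A \ Ap' i) ∪ Bp i) ∪ C
              = (((A \ {e}) \ Ap' i) ∪ (Bp i \ {e})) ∪ insert e C := by
            ext x
            simp only [Set.mem_union, Set.mem_diff, Set.mem_insert_iff, Set.mem_singleton_iff]
            by_cases hxe : x = e
            · subst hxe; simp [heA, heAp' i, heBpi]
            · tauto
          rw [e4]
          exact hbases' i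


end PartExch




/-- For bases `A, B` of a matroid and a partition `B = B₁ ⊔ ... ⊔ B_k`, there is a
partition `A = A₁ ⊔ ... ⊔ A_k` with `(A \ A_i) ∪ B_i` a basis for every `i`. -/
theorem partition_exchange_into_A {α : Type*} (M : Matroid α) (hfin : M.E.Finite)
    (A B : Set α) (hA : M.IsBase A) (hB : M.IsBase B)
    (k : ℕ) (Bp : Fin k → Set α)
    (hdisj : ∀ i j, i ≠ j → Disjoint (Bp i) (Bp j))
    (hunion : (⋃ i, Bp i) = B) :
    ∃ Ap : Fin k → Set α,
      (∀ i j, i ≠ j → Disjoint (Ap i) (Ap j)) ∧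
      (⋃ i, Ap i) = A ∧
      ∀ i, M.IsBase ((A \ Ap i) ∪ Bp i) := by
  obtain ⟨Ap, h1, h2, h3⟩ := PartExch.main_aux2 M hfin (A ∩ B).ncard k A B ∅ Bp le_rfl
    (by rwa [Set.union_empty]) (by rwa [Set.union_empty])
    (Set.disjoint_empty A) (Set.disjoint_empty B) hdisj hunion
  refine ⟨Ap, h1, h2, fun i => ?_⟩
  have := h3 i
  rwa [Set.union_empty] at this
end

section
/- Let M be a matroid on E, let B_1 and B_2 be disjoint bases of M, and let A_1 ⊆ B_1. Define lists L(e) = {1} for e ∈ A_1, L(e) = {2} for e ∈ B_1 \ A_1, and L(e) = {1,2} for e ∈ B_2. If M restricted to B_1 ∪ B_2 admits a proper coloring from these lists, then there exists A_2 ⊆ B_2 such that (B_1 \ A_1) ∪ A_2 and (B_2 \ A_2) ∪ A_1 are both bases of M. -/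
/-- An independent set with cardinality at least that of a base (in a finite matroid)
is itself a base. -/
lemma indep_base_of_ncard {α : Type*} {M : Matroid α} (hfin : M.E.Finite)
    {I B : Set α} (hI : M.Indep I) (hB : M.IsBase B) (h : B.ncard ≤ I.ncard) :
    M.IsBase I := by
  obtain ⟨B', hB', hIB'⟩ := hI.exists_isBase_superset
  have hB'fin : B'.Finite := hfin.subset hB'.subset_ground
  have hcard : B'.ncard = B.ncard := hB'.ncard_eq_ncard_of_isBase hB
  have : I = B' := Set.eq_of_subset_of_ncard_le hIB' (by omega) hB'fin
  rwa [this]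

/-- If `B₁, B₂` are disjoint bases, `A₁ ⊆ B₁`, and `M` restricted to `B₁ ∪ B₂`
admits a proper coloring from the lists `{1}` on `A₁`, `{2}` on `B₁ \ A₁` and
`{1,2}` on `B₂`, then there is `A₂ ⊆ B₂` with `(B₁ \ A₁) ∪ A₂` and
`(B₂ \ A₂) ∪ A₁` both bases. -/
theorem exchange_from_coloring {α : Type*} (M : Matroid α) (hfin : M.E.Finite)
    (B₁ B₂ : Set α) (hB₁ : M.IsBase B₁) (hB₂ : M.IsBase B₂)
    (hdisj : Disjoint B₁ B₂) (A₁ : Set α) (hA₁ : A₁ ⊆ B₁)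
    (L : α → Finset ℕ)
    (hL1 : ∀ e ∈ A₁, L e = {1}) (hL2 : ∀ e ∈ B₁ \ A₁, L e = {2})
    (hL3 : ∀ e ∈ B₂, L e = {1, 2})
    (hcol : ∃ c : α → ℕ, (∀ e ∈ B₁ ∪ B₂, c e ∈ L e) ∧
      ∀ i : ℕ, M.Indep {e ∈ B₁ ∪ B₂ | c e = i}) :
    ∃ A₂ ⊆ B₂, M.IsBase ((B₁ \ A₁) ∪ A₂) ∧ M.IsBase ((B₂ \ A₂) ∪ A₁) := by
  obtain ⟨c, hcL, hind⟩ := hcol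
  set A₂ : Set α := {e ∈ B₂ | c e = 2} with hA₂def
  have hA₂ : A₂ ⊆ B₂ := fun e he => he.1
  -- values of c
  have hc1 : ∀ e ∈ A₁, c e = 1 := by
    intro e he
    have := hcL e (Or.inl (hA₁ he))
    rw [hL1 e he] at this; simpa using this
  have hc2 : ∀ e ∈ B₁ \ A₁, c e = 2 := by
    intro e he
    have := hcL e (Or.inl he.1)
    rw [hL2 e he] at this; simpa using this
  have hc3 : ∀ e ∈ B₂, c e = 1 ∨ c e = 2 := by
    intro e he
    have := hcL e (Or.inr he)
    rw [hL3 e he] at this; simpa using this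
  have hdisj' : ∀ e ∈ B₁, e ∉ B₂ := fun e h1 h2 => hdisj.ne_of_mem h1 h2 rfl
  -- identify the color classes
  have h1 : {e ∈ B₁ ∪ B₂ | c e = 1} = (B₂ \ A₂) ∪ A₁ := by
    ext e
    simp only [Set.mem_setOf_eq, Set.mem_union, Set.mem_diff, hA₂def]
    constructor
    · rintro ⟨h12 | h12, hce⟩
      · right
        by_contra hne
        have := hc2 e ⟨h12, hne⟩; omega
      · left; exact ⟨h12, fun h => by have := h.2; omega⟩
    · rintro (⟨hb2, hne⟩ | ha1)
      · have hne' : c e ≠ 2 := fun h => hne ⟨hb2, h⟩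
        have := hc3 e hb2
        exact ⟨Or.inr hb2, by tauto⟩
      · exact ⟨Or.inl (hA₁ ha1), hc1 e ha1⟩
  have h2 : {e ∈ B₁ ∪ B₂ | c e = 2} = (B₁ \ A₁) ∪ A₂ := by
    ext e
    simp only [Set.mem_setOf_eq, Set.mem_union, Set.mem_diff, hA₂def]
    constructor
    · rintro ⟨h12 | h12, hce⟩
      · left
        refine ⟨h12, fun ha1 => ?_⟩
        have := hc1 e ha1; omega
      · right; exact ⟨h12, hce⟩
    · rintro (⟨hb1, hne⟩ | ⟨hb2, hce⟩)
      · exact ⟨Or.inl hb1, hc2 e ⟨hb1, hne⟩⟩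
      · exact ⟨Or.inr hb2, hce⟩
  have hI1 : M.Indep ((B₂ \ A₂) ∪ A₁) := h1 ▸ hind 1
  have hI2 : M.Indep ((B₁ \ A₁) ∪ A₂) := h2 ▸ hind 2
  -- cardinalities
  have hB₁fin : B₁.Finite := hfin.subset hB₁.subset_ground
  have hB₂fin : B₂.Finite := hfin.subset hB₂.subset_ground
  have hA₁fin : A₁.Finite := hB₁fin.subset hA₁
  have hA₂fin : A₂.Finite := hB₂fin.subset hA₂
  have hI1fin : ((B₂ \ A₂) ∪ A₁).Finite := (hB₂fin.diff).union hA₁fin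
  have hI2fin : ((B₁ \ A₁) ∪ A₂).Finite := (hB₁fin.diff).union hA₂fin
  have hd1 : Disjoint (B₂ \ A₂) A₁ :=
    ((hdisj.symm.mono_left Set.diff_subset).mono_right hA₁)
  have hd2 : Disjoint (B₁ \ A₁) A₂ :=
    (hdisj.mono_left Set.diff_subset).mono_right hA₂
  have hcard1 : ((B₂ \ A₂) ∪ A₁).ncard = (B₂ \ A₂).ncard + A₁.ncard :=
    Set.ncard_union_eq hd1 (hB₂fin.diff) hA₁fin
  have hcard2 : ((B₁ \ A₁) ∪ A₂).ncard = (B₁ \ A₁).ncard + A₂.ncard :=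
    Set.ncard_union_eq hd2 (hB₁fin.diff) hA₂fin
  have hsplit1 : (B₁ \ A₁).ncard + A₁.ncard = B₁.ncard := by
    rw [← Set.ncard_union_eq Set.disjoint_sdiff_left (hB₁fin.diff) hA₁fin,
      Set.diff_union_of_subset hA₁]
  have hsplit2 : (B₂ \ A₂).ncard + A₂.ncard = B₂.ncard := by
    rw [← Set.ncard_union_eq Set.disjoint_sdiff_left (hB₂fin.diff) hA₂fin,
      Set.diff_union_of_subset hA₂]
  have heq : B₁.ncard = B₂.ncard := hB₁.ncard_eq_ncard_of_isBase hB₂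
  -- each independent set has ncard ≤ base ncard
  have hle1 : ((B₂ \ A₂) ∪ A₁).ncard ≤ B₁.ncard := by
    obtain ⟨B, hB, hsub⟩ := hI1.exists_isBase_superset
    calc ((B₂ \ A₂) ∪ A₁).ncard ≤ B.ncard :=
          Set.ncard_le_ncard hsub (hfin.subset hB.subset_ground)
      _ = B₁.ncard := hB.ncard_eq_ncard_of_isBase hB₁
  have hle2 : ((B₁ \ A₁) ∪ A₂).ncard ≤ B₁.ncard := by
    obtain ⟨B, hB, hsub⟩ := hI2.exists_isBase_superset
    calc ((B₁ \ A₁) ∪ A₂).ncard ≤ B.ncard :=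
          Set.ncard_le_ncard hsub (hfin.subset hB.subset_ground)
      _ = B₁.ncard := hB.ncard_eq_ncard_of_isBase hB₁
  have hsum : ((B₂ \ A₂) ∪ A₁).ncard + ((B₁ \ A₁) ∪ A₂).ncard = B₁.ncard + B₂.ncard := by
    rw [hcard1, hcard2]; omega
  refine ⟨A₂, hA₂, ?_, ?_⟩
  · exact indep_base_of_ncard hfin hI2 hB₁ (by omega)
  · exact indep_base_of_ncard hfin hI1 hB₁ (by omega)
end

section
/- Let M be a matroid on a finite ground set E, let ℓ : E → ℕ, and for each i let Q_i^ℓ = {e ∈ E : i ≤ ℓ(e)}. Then M is colorable from the lists {1,...,ℓ(e)} if and only if for every A ⊆ E, Σ_i r(A ∩ Q_i^ℓ) ≥ |A|. -/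
/-- The rank of a set `A` in a matroid `M`. -/
noncomputable def Matroid.rankOn {α : Type*} (M : Matroid α) (A : Set α) : ℕ :=
  sSup {n : ℕ | ∃ I : Set α, I ⊆ A ∧ M.Indep I ∧ I.ncard = n}


open Set

namespace MUaux

variable {α : Type*} (M : Matroid α) (ℓ : α → ℕ)

def cls (c : α → ℕ) (i : ℕ) : Set α := {e ∈ M.E | c e = i}

def Arc (c : α → ℕ) (x y : α) : Prop :=
  x ∈ M.E ∧ y ∈ M.E ∧ 1 ≤ c y ∧ c y ≤ ℓ x ∧ x ∉ M.closure (cls M c (c y) \ {y})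

def Sink (c : α → ℕ) (z : α) : Prop :=
  z ∈ M.E ∧ ∃ i, 1 ≤ i ∧ i ≤ ℓ z ∧ c z ≠ i ∧ M.Indep (insert z (cls M c i))

def Valid (c : α → ℕ) : Prop :=
  (∀ e ∈ M.E, c e ≤ ℓ e) ∧ ∀ i, 1 ≤ i → M.Indep (cls M c i)

variable {M ℓ}




lemma ncard_le_rankOn (hfin : M.E.Finite) {I X : Set α} (hX : X ⊆ M.E)
    (hI : M.Indep I) (hIX : I ⊆ X) : I.ncard ≤ M.rankOn X := by
  apply le_csSup
  · refine ⟨X.ncard, ?_⟩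
    rintro n ⟨J, hJX, -, rfl⟩
    exact Set.ncard_le_ncard hJX (hfin.subset hX)
  · exact ⟨I, hIX, hI, rfl⟩

lemma rankOn_le (hfin : M.E.Finite) {K X : Set α} (hK : M.Indep K)
    (h : X ⊆ M.closure K) : M.rankOn X ≤ K.ncard := by
  apply csSup_le (Set.nonempty_of_mem (show (0:ℕ) ∈ {n : ℕ | ∃ I : Set α, I ⊆ X ∧ M.Indep I ∧ I.ncard = n} from ⟨∅, Set.empty_subset _, M.empty_indep, by simp⟩))
  rintro n ⟨I, hIX, hI, rfl⟩
  have hKb : M.IsBasis K (M.closure K) := hK.isBasis_closure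
  obtain ⟨J, hJ, hIJ⟩ := hI.subset_isBasis_of_subset (hIX.trans h)
  have hcard : J.encard = K.encard := hJ.encard_eq_encard hKb
  have hKfin : K.Finite := hfin.subset hK.subset_ground
  have hJfin : J.Finite := by
    rw [← Set.encard_lt_top_iff, hcard, Set.encard_lt_top_iff]; exact hKfin
  calc I.ncard ≤ J.ncard := Set.ncard_le_ncard hIJ hJfin
    _ = K.ncard := by
        rw [Set.ncard_def, Set.ncard_def, hcard]

lemma ncard_biUnion {s : Finset ℕ} {f : ℕ → Set α} (hfin : ∀ i, (f i).Finite)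
    (hdisj : ∀ i ∈ s, ∀ j ∈ s, i ≠ j → Disjoint (f i) (f j)) :
    (⋃ i ∈ s, f i).ncard = ∑ i ∈ s, (f i).ncard := by
  classical
  induction s using Finset.induction with
  | empty => simp
  | @insert a s ha ih =>
    have hdisj' : Disjoint (f a) (⋃ i ∈ s, f i) :=
      Set.disjoint_iUnion_right.2 fun i => Set.disjoint_iUnion_right.2 fun hi =>
        hdisj a (Finset.mem_insert_self a s) i (Finset.mem_insert_of_mem hi)
        (fun h => ha (h ▸ hi))
    rw [Finset.set_biUnion_insert,
      Set.ncard_union_eq hdisj' (hfin a) (Set.Finite.biUnion s.finite_toSet fun i _ => hfin i),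
      ih (fun i hi j hj => hdisj i (Finset.mem_insert_of_mem hi) j (Finset.mem_insert_of_mem hj)),
      Finset.sum_insert ha]



lemma cl_swap {K : Set α} {x e : α} (hK : M.Indep K) (hx : x ∈ K)
    (he : e ∈ M.closure K) (hne : e ∉ M.closure (K \ {x})) :
    M.closure (insert e (K \ {x})) = M.closure K := by
  have hxK : insert x (K \ {x}) = K := by
    rw [Set.insert_diff_singleton, Set.insert_eq_of_mem hx]
  have hex : x ∈ M.closure (insert e (K \ {x})) :=
    (Matroid.closure_exchange (X := K \ {x}) (by rw [hxK]; exact ⟨he, hne⟩)).1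
  apply subset_antisymm
  · apply M.closure_subset_closure_of_subset_closure
    rintro y (rfl | hy)
    · exact he
    · exact M.mem_closure_of_mem' hy.1 (hK.subset_ground hy.1)
  · apply M.closure_subset_closure_of_subset_closure
    intro y hy
    rw [← hxK] at hy
    rcases hy with rfl | hy
    · exact hex
    · exact M.mem_closure_of_mem' (Set.mem_insert_of_mem _ hy)
        (hK.subset_ground (Set.diff_subset hy))

lemma colorHead {c : α → ℕ} (hV : Valid M ℓ c) {z : α} (hz0 : c z = 0)
    (hs : Sink M ℓ c z) :
    ∃ c', Valid M ℓ c' ∧ (∀ e, 1 ≤ c e → 1 ≤ c' e) ∧ 1 ≤ c' z := by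
  classical
  obtain ⟨hzE, i, h1, h2, -, hind⟩ := hs
  refine ⟨Function.update c z i, ⟨?_, ?_⟩, ?_, by simp [h1]⟩
  · intro e he
    rcases eq_or_ne e z with rfl | hne
    · simpa using h2
    · simpa [Function.update_of_ne hne] using hV.1 e he
  · intro j hj
    by_cases hji : j = i
    · have hcl : cls M (Function.update c z i) j = insert z (cls M c j) := by
        ext e
        rcases eq_or_ne e z with rfl | hne'
        · simp [cls, hzE, hji]
        · simp [cls, Function.update_of_ne hne', hne']
      rw [hcl, hji]; exact hind
    · have hcl : cls M (Function.update c z i) j = cls M c j := by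
        ext e
        rcases eq_or_ne e z with rfl | hne'
        · simp only [cls, Function.update_self, Set.mem_setOf_eq, hz0]
          constructor
          · rintro ⟨hE, h⟩; exact absurd h.symm hji
          · rintro ⟨hE, h⟩; omega
        · simp [cls, Function.update_of_ne hne']
      rw [hcl]; exact hV.2 j hj
  · intro e he
    rcases eq_or_ne e z with rfl | hne
    · omega
    · rwa [Function.update_of_ne hne]

/-- The single-exchange step. -/
lemma step {c : α → ℕ} (hV : Valid M ℓ c) {x₀ x₁ : α} {i₁ : ℕ}
    (h0 : c x₀ = 0) (hE : x₀ ∈ M.E) (hne01 : x₀ ≠ x₁)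
    (hi₁ : c x₁ = i₁) (arc0 : Arc M ℓ c x₀ x₁) (hhs : ¬ Sink M ℓ c x₀) :
    ∃ c₁ : α → ℕ, Valid M ℓ c₁ ∧ c₁ x₀ = i₁ ∧ c₁ x₁ = 0 ∧
      (∀ e, e ≠ x₀ → e ≠ x₁ → c₁ e = c e) ∧
      (∀ u v, v ∈ M.E → v ≠ x₀ → v ≠ x₁ → (c v = i₁ → x₀ ∈ M.closure (cls M c i₁ \ {v})) →
        (Arc M ℓ c u v ↔ Arc M ℓ c₁ u v)) ∧
      (∀ z, z ≠ x₀ → Sink M ℓ c z → Sink M ℓ c₁ z) := by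
  classical
  obtain ⟨-, hx₁E, hcy1, hcyℓ, hncl0⟩ := arc0
  rw [hi₁] at hcy1 hcyℓ hncl0
  have hi₁1 : 1 ≤ i₁ := hcy1
  set K := cls M c i₁ with hKdef
  have hncl : x₀ ∉ M.closure (K \ {x₁}) := hncl0
  have hx₁K : x₁ ∈ K := ⟨hx₁E, hi₁⟩
  have hKind : M.Indep K := hV.2 i₁ hi₁1
  have hx₀K : x₀ ∉ K := fun h => by
    have h2 : c x₀ = i₁ := h.2
    omega
  have hx₀cl : x₀ ∈ M.closure K := by
    have hdep : ¬ M.Indep (insert x₀ K) := fun hind =>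
      hhs ⟨hE, i₁, hi₁1, hcyℓ, by omega, hind⟩
    by_contra hcl
    exact hdep ((hKind.notMem_closure_iff_of_notMem hx₀K hE).1 hcl)
  refine ⟨Function.update (Function.update c x₁ 0) x₀ i₁, ?_⟩
  set c₁ := Function.update (Function.update c x₁ 0) x₀ i₁ with hc₁def
  have hc₁x₀ : c₁ x₀ = i₁ := by simp [hc₁def]
  have hc₁x₁ : c₁ x₁ = 0 := by
    simp [hc₁def, Function.update_of_ne (Ne.symm hne01)]
  have hc₁other : ∀ e, e ≠ x₀ → e ≠ x₁ → c₁ e = c e := by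
    intro e he0 he1
    simp [hc₁def, Function.update_of_ne he0, Function.update_of_ne he1]
  have hcls₁ : cls M c₁ i₁ = insert x₀ (K \ {x₁}) := by
    ext e
    rcases eq_or_ne e x₀ with rfl | he0
    · simp [cls, hE, hc₁x₀]
    rcases eq_or_ne e x₁ with rfl | he1
    · have hL : e ∉ cls M c₁ i₁ := fun h => by
        have h2 : c₁ e = i₁ := h.2
        omega
      have hR : e ∉ insert x₀ (K \ {e}) := by
        rintro (h | h)
        · exact hne01 h.symm
        · exact h.2 rfl
      simp [hL, hR]
    · simp only [cls, Set.mem_setOf_eq, hc₁other e he0 he1, Set.mem_insert_iff,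
        Set.mem_diff, Set.mem_singleton_iff]
      constructor
      · rintro ⟨hEe, h⟩; exact Or.inr ⟨⟨hEe, h⟩, he1⟩
      · rintro (h | ⟨⟨hEe, h⟩, -⟩)
        · exact absurd h he0
        · exact ⟨hEe, h⟩
  have hclsj : ∀ j, j ≠ i₁ → j ≠ 0 → cls M c₁ j = cls M c j := by
    intro j hji hj0
    ext e
    rcases eq_or_ne e x₀ with rfl | he0
    · simp only [cls, Set.mem_setOf_eq, hc₁x₀, h0]
      constructor
      · rintro ⟨-, h⟩; exact absurd h.symm hji
      · rintro ⟨-, h⟩; exact absurd h.symm hj0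
    rcases eq_or_ne e x₁ with rfl | he1
    · simp only [cls, Set.mem_setOf_eq, hc₁x₁, hi₁]
      constructor
      · rintro ⟨-, h⟩; exact absurd h.symm hj0
      · rintro ⟨-, h⟩; exact absurd h.symm hji
    · simp [cls, hc₁other e he0 he1]
  have hc₁cl : M.closure (insert x₀ (K \ {x₁})) = M.closure K :=
    cl_swap hKind hx₁K hx₀cl hncl
  have hins_ind : M.Indep (insert x₀ (K \ {x₁})) := by
    have hsub : M.Indep (K \ {x₁}) := hKind.subset Set.diff_subset
    have hx₀notin : x₀ ∉ K \ {x₁} := fun h => hx₀K h.1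
    exact (hsub.notMem_closure_iff_of_notMem hx₀notin hE).1 hncl
  have hV₁ : Valid M ℓ c₁ := by
    constructor
    · intro e he
      rcases eq_or_ne e x₀ with rfl | he0
      · rw [hc₁x₀]; exact hcyℓ
      rcases eq_or_ne e x₁ with rfl | he1
      · rw [hc₁x₁]; exact Nat.zero_le _
      · rw [hc₁other e he0 he1]; exact hV.1 e he
    · intro j hj
      by_cases hji : j = i₁
      · rw [hji, hcls₁]; exact hins_ind
      · rw [hclsj j hji (by omega)]; exact hV.2 j hj
  refine ⟨hV₁, hc₁x₀, hc₁x₁, hc₁other, ?_, ?_⟩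
  · -- arc transfer
    intro u v hvE hv0 hv1 hcond
    have hcv : c₁ v = c v := hc₁other v hv0 hv1
    by_cases hcv1 : 1 ≤ c v
    · by_cases hvi : c v = i₁
      · have hvK : v ∈ K := ⟨hvE, hvi⟩
        have hkey : M.closure (cls M c₁ (c v) \ {v}) = M.closure (cls M c (c v) \ {v}) := by
          rw [hvi, hcls₁]
          have hseteq : insert x₀ (K \ {x₁}) \ {v} = insert x₀ ((K \ {v}) \ {x₁}) := by
            ext e
            simp only [Set.mem_insert_iff, Set.mem_diff, Set.mem_singleton_iff]
            constructor
            · rintro ⟨rfl | ⟨hK, h1⟩, hv⟩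
              · exact Or.inl rfl
              · exact Or.inr ⟨⟨hK, hv⟩, h1⟩
            · rintro (rfl | ⟨⟨hK, hv⟩, h1⟩)
              · exact ⟨Or.inl rfl, fun h => hv0 h.symm⟩
              · exact ⟨Or.inr ⟨hK, h1⟩, hv⟩
          rw [hseteq, ← hKdef]
          exact cl_swap (hKind.subset Set.diff_subset)
            ⟨hx₁K, fun h => hv1 (Set.mem_singleton_iff.1 h).symm⟩
            (hcond hvi)
            (fun h => hncl (M.closure_subset_closure
              (Set.diff_subset_diff_left Set.diff_subset) h))
        unfold Arc
        rw [hcv, hkey]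
      · have hkey : cls M c₁ (c v) = cls M c (c v) := hclsj (c v) hvi (by omega)
        unfold Arc
        rw [hcv, hkey]
    · constructor
      · rintro ⟨-, -, h, -⟩; omega
      · rintro ⟨-, -, h, -⟩; rw [hcv] at h; omega
  · -- sink transfer
    rintro z hz0 ⟨hzE, i, hi1, hiℓ, hzi, hind⟩
    by_cases hii : i = i₁
    · subst hii
      have hz1 : z ≠ x₁ := fun h => hzi (h ▸ hi₁)
      have hzK : z ∉ K := fun h => hzi h.2
      have hzcl : z ∉ M.closure K := ((hKind.insert_indep_iff_of_notMem hzK).1 hind).2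
      refine ⟨hzE, i, hi1, hiℓ, ?_, ?_⟩
      · rw [hc₁other z hz0 hz1]; exact hzi
      · rw [hcls₁]
        have hzncl : z ∉ M.closure (insert x₀ (K \ {x₁})) := by
          rw [hc₁cl]; exact hzcl
        exact (hins_ind.notMem_closure_iff_of_notMem
          (by rintro (rfl | h); exact hz0 rfl; exact hzK h.1) hzE).1 hzncl
    · refine ⟨hzE, i, hi1, hiℓ, ?_, ?_⟩
      · rcases eq_or_ne z x₁ with rfl | hz1
        · rw [hc₁x₁]; omega
        · rw [hc₁other z hz0 hz1]; exact hzi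
      · rw [hclsj i hii (by omega)]; exact hind

lemma aug : ∀ n (c : α → ℕ) (p : ℕ → α), Valid M ℓ c → c (p 0) = 0 → p 0 ∈ M.E →
    (∀ j, j < n → Arc M ℓ c (p j) (p (j+1))) → Sink M ℓ c (p n) →
    (∀ a b, a + 2 ≤ b → b ≤ n → ¬ Arc M ℓ c (p a) (p b)) →
    (∀ a, a ≤ n → ∀ b, b ≤ n → p a = p b → a = b) →
    ∃ c', Valid M ℓ c' ∧ (∀ e, 1 ≤ c e → 1 ≤ c' e) ∧ 1 ≤ c' (p 0) := by
  intro n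
  induction n with
  | zero =>
    intro c p hV h0 hE harc hsink hH4 hinj
    exact colorHead hV h0 hsink
  | succ n IH =>
    intro c p hV h0 hE harc hsink hH4 hinj
    by_cases hhs : Sink M ℓ c (p 0)
    · exact colorHead hV h0 hhs
    have arc0 : Arc M ℓ c (p 0) (p 1) := harc 0 (Nat.succ_pos n)
    have hx01 : p 0 ≠ p 1 := fun h => by
      have := hinj 0 (by omega) 1 (by omega) h; omega
    obtain ⟨c₁, hV₁, hc₁x₀, hc₁x₁, hc₁other, harcEquiv, hsink₁⟩ :=
      step hV h0 hE hx01 rfl arc0 hhs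
    have hi₁1 : 1 ≤ c (p 1) := arc0.2.2.1
    have hi₁ℓ : c (p 1) ≤ ℓ (p 0) := arc0.2.2.2.1
    -- shortcut fact
    have hshort : ∀ b, 2 ≤ b → b ≤ n + 1 → c (p b) = c (p 1) →
        p 0 ∈ M.closure (cls M c (c (p 1)) \ {p b}) := by
      intro b hb2 hbn hcb
      have hnoarc := hH4 0 b (by omega) hbn
      have hpbE : p b ∈ M.E := by
        have h' := harc (b-1) (by omega)
        have hb : b - 1 + 1 = b := by omega
        rw [hb] at h'
        exact h'.2.1
      by_contra hcl
      exact hnoarc ⟨hE, hpbE, by omega, by rw [hcb]; exact hi₁ℓ, by rw [hcb]; exact hcl⟩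
    have hne01' : ∀ b, 2 ≤ b → b ≤ n + 1 → p b ≠ p 0 ∧ p b ≠ p 1 := by
      intro b hb2 hbn
      constructor
      · intro h; have := hinj b (by omega) 0 (by omega) h; omega
      · intro h; have := hinj b (by omega) 1 (by omega) h; omega
    obtain ⟨c', hV', hmono', hhead'⟩ := IH c₁ (fun j => p (j+1)) hV₁
      hc₁x₁ arc0.2.1
      (by
        intro j hj
        have horig := harc (j+1) (by omega)
        have hv := hne01' (j+2) (by omega) (by omega)
        exact (harcEquiv (p (j+1)) (p (j+2)) horig.2.1 hv.1 hv.2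
          (hshort (j+2) (by omega) (by omega))).1 horig)
      (by
        rcases Nat.eq_zero_or_pos n with rfl | hn
        · exact hsink₁ (p 1) (Ne.symm hx01) hsink
        · have hv := hne01' (n+1) (by omega) (by omega)
          exact hsink₁ (p (n+1)) hv.1 hsink)
      (by
        intro a b hab hbn harc₁
        have hv := hne01' (b+1) (by omega) (by omega)
        have hvE : p (b+1) ∈ M.E := harc₁.2.1
        exact hH4 (a+1) (b+1) (by omega) (by omega)
          ((harcEquiv (p (a+1)) (p (b+1)) hvE hv.1 hv.2
            (hshort (b+1) (by omega) (by omega))).2 harc₁))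
      (by
        intro a ha b hb h
        have := hinj (a+1) (by omega) (b+1) (by omega) h
        omega)
    refine ⟨c', hV', ?_, ?_⟩
    · intro e he
      rcases eq_or_ne e (p 1) with rfl | he1
      · exact hhead'
      rcases eq_or_ne e (p 0) with rfl | he0
      · rw [h0] at he; omega
      · exact hmono' e (by rw [hc₁other e he0 he1]; exact he)
    · exact hmono' (p 0) (by rw [hc₁x₀]; exact hi₁1)

lemma pathOfRTG {r : α → α → Prop} {a b : α} (h : Relation.ReflTransGen r a b) :
    ∃ n : ℕ, ∃ p : ℕ → α, p 0 = a ∧ p n = b ∧ ∀ j, j < n → r (p j) (p (j+1)) := by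
  induction h with
  | refl => exact ⟨0, fun _ => a, rfl, rfl, by omega⟩
  | @tail b' c' h₁ h₂ IH =>
    obtain ⟨n, p, hp0, hpn, harc⟩ := IH
    refine ⟨n + 1, fun j => if j ≤ n then p j else c', by simpa using hp0, by simp, ?_⟩
    intro j hj
    rcases Nat.lt_or_ge j n with h | h
    · simpa [Nat.le_of_lt h, Nat.succ_le_of_lt h] using harc j h
    · have hjn : j = n := by omega
      subst hjn
      simpa [hpn] using h₂

lemma improve (hfin : M.E.Finite) (d : ℕ) (hd : ∀ e ∈ M.E, ℓ e ≤ d)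
    (hr : ∀ A : Set α, A ⊆ M.E →
      A.ncard ≤ ∑ i ∈ Finset.Icc 1 d, M.rankOn (A ∩ {e ∈ M.E | i ≤ ℓ e}))
    {c : α → ℕ} (hV : Valid M ℓ c) {e₀ : α} (he₀ : e₀ ∈ M.E) (h0 : c e₀ = 0) :
    ∃ c', Valid M ℓ c' ∧
      {e ∈ M.E | 1 ≤ c e}.ncard < {e ∈ M.E | 1 ≤ c' e}.ncard := by
  classical
  set Reach := Relation.ReflTransGen (Arc M ℓ c) e₀ with hReach
  have hReachE : ∀ x, Reach x → x ∈ M.E := by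
    intro x hx
    induction hx with
    | refl => exact he₀
    | tail _ h IH => exact h.2.1
  by_cases hex : ∃ x, Reach x ∧ Sink M ℓ c x
  · -- augment
    obtain ⟨x, hxR, hxS⟩ := hex
    have hP : ∃ n, ∃ p : ℕ → α, p 0 = e₀ ∧ (∀ j, j < n → Arc M ℓ c (p j) (p (j+1))) ∧
        Sink M ℓ c (p n) := by
      obtain ⟨n, p, hp0, hpn, harc⟩ := pathOfRTG hxR
      exact ⟨n, p, hp0, harc, hpn ▸ hxS⟩
    set n₀ := Nat.find hP with hn₀
    obtain ⟨p, hp0, harc, hsink⟩ := Nat.find_spec hP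
    -- injectivity
    have hinj : ∀ a, a ≤ n₀ → ∀ b, b ≤ n₀ → p a = p b → a = b := by
      have key : ∀ a b, a < b → b ≤ n₀ → p a ≠ p b := by
        intro a b hab hbn heq
        rcases eq_or_lt_of_le hbn with rfl | hblt
        · have : a < n₀ := hab
          exact Nat.find_min hP this ⟨p, hp0, fun j hj => harc j (by omega), heq ▸ hsink⟩
        · set q : ℕ → α := fun j => if j ≤ a then p j else p (j + (b - a)) with hq
          have hlt : n₀ - (b - a) < n₀ := by omega
          refine Nat.find_min hP hlt ⟨q, ?_, ?_, ?_⟩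
          · simp [hq, hp0]
          · intro j hj
            rcases Nat.lt_trichotomy j a with h | rfl | h
            · simpa [hq, Nat.le_of_lt h, Nat.succ_le_of_lt h] using harc j (by omega)
            · have h1 : ¬ (j + 1 ≤ j) := by omega
              simp only [hq, le_refl, if_pos, h1, if_neg]
              have : j + 1 + (b - j) = b + 1 := by omega
              rw [this, heq]
              simpa using harc b (by omega)
            · have h1 : ¬ (j ≤ a) := by omega
              have h2 : ¬ (j + 1 ≤ a) := by omega
              simp only [hq, h1, if_neg, h2]
              have : j + 1 + (b - a) = (j + (b - a)) + 1 := by omega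
              rw [this]
              exact harc (j + (b - a)) (by omega)
          · have h1 : ¬ (n₀ - (b - a) ≤ a) := by omega
            simp only [hq, h1, if_neg]
            have : n₀ - (b - a) + (b - a) = n₀ := by omega
            rw [this]
            exact hsink
      intro a ha b hb heq
      rcases Nat.lt_trichotomy a b with h | h | h
      · exact absurd heq (key a b h hb)
      · exact h
      · exact absurd heq.symm (key b a h ha)
    -- no shortcut
    have hH4 : ∀ a b, a + 2 ≤ b → b ≤ n₀ → ¬ Arc M ℓ c (p a) (p b) := by
      intro a b hab hbn harcab
      set q : ℕ → α := fun j => if j ≤ a then p j else p (j + (b - a - 1)) with hq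
      have hlt : n₀ - (b - a - 1) < n₀ := by omega
      refine Nat.find_min hP hlt ⟨q, ?_, ?_, ?_⟩
      · simp [hq, hp0]
      · intro j hj
        rcases Nat.lt_trichotomy j a with h | rfl | h
        · simpa [hq, Nat.le_of_lt h, Nat.succ_le_of_lt h] using harc j (by omega)
        · have h1 : ¬ (j + 1 ≤ j) := by omega
          simp only [hq, le_refl, if_pos, h1, if_neg]
          have : j + 1 + (b - j - 1) = b := by omega
          rw [this]
          exact harcab
        · have h1 : ¬ (j ≤ a) := by omega
          have h2 : ¬ (j + 1 ≤ a) := by omega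
          simp only [hq, h1, if_neg, h2]
          have : j + 1 + (b - a - 1) = (j + (b - a - 1)) + 1 := by omega
          rw [this]
          exact harc (j + (b - a - 1)) (by omega)
      · have h1 : ¬ (n₀ - (b - a - 1) ≤ a) := by omega
        simp only [hq, h1, if_neg]
        have : n₀ - (b - a - 1) + (b - a - 1) = n₀ := by omega
        rw [this]
        exact hsink
    obtain ⟨c', hV', hmono, hhead⟩ := aug n₀ c p hV (hp0 ▸ h0) (hp0 ▸ he₀)
      harc hsink hH4 hinj
    refine ⟨c', hV', ?_⟩
    have hsub : insert e₀ {e ∈ M.E | 1 ≤ c e} ⊆ {e ∈ M.E | 1 ≤ c' e} := by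
      rintro e (rfl | ⟨heE, he⟩)
      · exact ⟨he₀, hp0 ▸ hhead⟩
      · exact ⟨heE, hmono e he⟩
    calc {e ∈ M.E | 1 ≤ c e}.ncard
        < (insert e₀ {e ∈ M.E | 1 ≤ c e}).ncard := by
          rw [Set.ncard_insert_of_notMem (fun h => by have h2 := h.2; omega)
            (hfin.subset (Set.sep_subset _ _))]
          omega
      _ ≤ {e ∈ M.E | 1 ≤ c' e}.ncard :=
          Set.ncard_le_ncard hsub (hfin.subset (Set.sep_subset _ _))
  · -- tight set: contradiction with the rank condition
    exfalso
    set A := {x | Reach x} with hA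
    have hAE : A ⊆ M.E := fun x hx => hReachE x hx
    have hAfin : A.Finite := hfin.subset hAE
    have he₀A : e₀ ∈ A := Relation.ReflTransGen.refl
    have hbound : ∀ i ∈ Finset.Icc 1 d,
        M.rankOn (A ∩ {e ∈ M.E | i ≤ ℓ e}) ≤ (cls M c i ∩ A).ncard := by
      intro i hi
      rw [Finset.mem_Icc] at hi
      have hKind : M.Indep (cls M c i) := hV.2 i hi.1
      have hKAind : M.Indep (cls M c i ∩ A) := hKind.subset Set.inter_subset_left
      refine rankOn_le hfin hKAind ?_
      intro x hx
      obtain ⟨hxA, hxE, hxℓ⟩ := hx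
      by_cases hcx : c x = i
      · exact M.mem_closure_of_mem' ⟨⟨hxE, hcx⟩, hxA⟩ hxE
      · have hns : ¬ Sink M ℓ c x := fun hs => hex ⟨x, hxA, hs⟩
        have hdep : ¬ M.Indep (insert x (cls M c i)) := fun hind =>
          hns ⟨hxE, i, hi.1, hxℓ, hcx, hind⟩
        have hxK : x ∉ cls M c i := fun h => hcx h.2
        have hxcl : x ∈ M.closure (cls M c i) := by
          by_contra hcl
          exact hdep ((hKind.notMem_closure_iff_of_notMem hxK hxE).1 hcl)
        set K := cls M c i with hK
        set S := {y ∈ K | x ∈ M.closure (K \ {y})} with hS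
        have hKS : K \ S ⊆ K ∩ A := by
          rintro y ⟨hyK, hyS⟩
          have hncl : x ∉ M.closure (K \ {y}) := fun h => hyS ⟨hyK, h⟩
          have harcxy : Arc M ℓ c x y :=
            ⟨hxE, hyK.1, by rw [hyK.2]; exact hi.1, by rw [hyK.2]; exact hxℓ,
              by rw [hyK.2]; exact hncl⟩
          exact ⟨hyK, Relation.ReflTransGen.tail hxA harcxy⟩
        have hclKS : x ∈ M.closure (K \ S) := by
          rcases Set.eq_empty_or_nonempty S with hSe | hSne
          · rw [hSe, Set.diff_empty]; exact hxcl
          · have hind : M.Indep (⋃ y ∈ S, (K \ {y})) :=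
              hKind.subset (Set.iUnion₂_subset fun y _ => Set.diff_subset)
            have hcleq := Matroid.closure_biInter_eq_biInter_closure_of_biUnion_indep
              (M := M) hSne (I := fun y => K \ {y}) hind
            have hInter : (⋂ y ∈ S, (K \ {y})) = K \ S := by
              ext e
              simp only [Set.mem_iInter, Set.mem_diff, Set.mem_singleton_iff]
              constructor
              · intro h
                obtain ⟨y₀, hy₀⟩ := hSne
                exact ⟨(h y₀ hy₀).1, fun heS => ((h e heS).2 rfl)⟩
              · rintro ⟨heK, heS⟩ y hyS
                exact ⟨heK, fun hey => heS (hey ▸ hyS)⟩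
            rw [hInter] at hcleq
            rw [hcleq]
            apply Set.mem_iInter₂.2
            intro y hyS
            exact hyS.2
        exact M.closure_subset_closure (hKS.trans (Set.inter_subset_inter_left _ le_rfl)) hclKS
    have hsum : ∑ i ∈ Finset.Icc 1 d, (cls M c i ∩ A).ncard
        = (⋃ i ∈ Finset.Icc 1 d, (cls M c i ∩ A)).ncard := by
      rw [ncard_biUnion (fun i => hfin.subset (fun e he => he.1.1)) ?_]
      intro i hi j hj hij
      rw [Set.disjoint_left]
      rintro e ⟨⟨-, hei⟩, -⟩ ⟨⟨-, hej⟩, -⟩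
      exact hij (hei ▸ hej ▸ rfl)
    have hunion : (⋃ i ∈ Finset.Icc 1 d, (cls M c i ∩ A)) = {e ∈ A | 1 ≤ c e} := by
      ext e
      simp only [Set.mem_iUnion, Finset.mem_Icc, Set.mem_setOf_eq, Set.mem_inter_iff]
      constructor
      · rintro ⟨i, ⟨hi1, -⟩, ⟨-, hci⟩, heA⟩
        exact ⟨heA, by omega⟩
      · rintro ⟨heA, he1⟩
        have heE : e ∈ M.E := hAE heA
        exact ⟨c e, ⟨he1, (hV.1 e heE).trans (hd e heE)⟩, ⟨heE, rfl⟩, heA⟩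
    have hlast : {e ∈ A | 1 ≤ c e}.ncard < A.ncard := by
      apply lt_of_le_of_lt (Set.ncard_le_ncard ?_ hAfin.diff)
      · exact Set.ncard_diff_singleton_lt_of_mem he₀A hAfin
      · rintro e ⟨heA, he1⟩
        exact ⟨heA, fun h => by rw [Set.mem_singleton_iff] at h; rw [h, h0] at he1; omega⟩
    have := hr A hAE
    have hchain : (∑ i ∈ Finset.Icc 1 d, M.rankOn (A ∩ {e ∈ M.E | i ≤ ℓ e})) < A.ncard := by
      calc ∑ i ∈ Finset.Icc 1 d, M.rankOn (A ∩ {e ∈ M.E | i ≤ ℓ e})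
          ≤ ∑ i ∈ Finset.Icc 1 d, (cls M c i ∩ A).ncard := Finset.sum_le_sum hbound
        _ = (⋃ i ∈ Finset.Icc 1 d, (cls M c i ∩ A)).ncard := hsum
        _ = {e ∈ A | 1 ≤ c e}.ncard := by rw [hunion]
        _ < A.ncard := hlast
    omega

end MUaux

open MUaux in
/-- With `Q_i^ℓ = {e ∈ E : i ≤ ℓ(e)}`, a matroid is colorable from the lists
`{1,...,ℓ(e)}` if and only if `∑ i, r(A ∩ Q_i^ℓ) ≥ |A|` for every `A ⊆ E`. -/
theorem initial_segment_colorable_iff_rank_condition {α : Type*} (M : Matroid α)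
    (hfin : M.E.Finite) (ℓ : α → ℕ) (d : ℕ) (hd : ∀ e ∈ M.E, ℓ e ≤ d) :
    (∃ c : α → ℕ, (∀ e ∈ M.E, 1 ≤ c e ∧ c e ≤ ℓ e) ∧
        ∀ i : ℕ, M.Indep {e ∈ M.E | c e = i}) ↔
    (∀ A : Set α, A ⊆ M.E →
        ∑ i ∈ Finset.Icc 1 d, M.rankOn (A ∩ {e ∈ M.E | i ≤ ℓ e}) ≥ A.ncard) := by
  classical
  constructor
  · rintro ⟨c, hc, hind⟩ A hA
    have hAeq : (⋃ i ∈ Finset.Icc 1 d, {e ∈ A | c e = i}) = A := by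
      ext e
      simp only [Set.mem_iUnion, Finset.mem_Icc, Set.mem_setOf_eq]
      constructor
      · rintro ⟨i, -, he, -⟩; exact he
      · intro he
        have heE := hA he
        exact ⟨c e, ⟨(hc e heE).1, (hc e heE).2.trans (hd e heE)⟩, he, rfl⟩
    have hAfin : A.Finite := hfin.subset hA
    have hcard : A.ncard = ∑ i ∈ Finset.Icc 1 d, ({e ∈ A | c e = i}).ncard := by
      rw [← hAeq, ncard_biUnion (fun i => hAfin.subset (Set.sep_subset _ _)) ?_]
      · rw [hAeq]
      · intro i hi j hj hij
        rw [Set.disjoint_left]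
        rintro e ⟨-, hei⟩ ⟨-, hej⟩
        exact hij (hei ▸ hej ▸ rfl)
    rw [ge_iff_le, hcard]
    apply Finset.sum_le_sum
    intro i hi
    apply ncard_le_rankOn hfin (Set.inter_subset_left.trans hA)
    · exact (hind i).subset (fun e he => ⟨hA he.1, he.2⟩)
    · rintro e ⟨heA, hci⟩
      have heE := hA heA
      exact ⟨heA, heE, hci ▸ (hc e heE).2⟩
  · intro hr
    set V := {k | ∃ c, Valid M ℓ c ∧ {e ∈ M.E | 1 ≤ c e}.ncard = k} with hV
    have h0V : {e ∈ M.E | 1 ≤ (fun _ : α => 0) e}.ncard ∈ V := by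
      refine ⟨fun _ => 0, ⟨fun e _ => Nat.zero_le _, fun i hi => ?_⟩, rfl⟩
      have : cls M (fun _ : α => 0) i = ∅ := by
        ext e
        simp only [cls, Set.mem_setOf_eq, Set.mem_empty_iff_false, iff_false, not_and]
        intro _
        omega
      rw [this]; exact M.empty_indep
    have hbdd : BddAbove V := by
      refine ⟨M.E.ncard, ?_⟩
      rintro k ⟨c, -, rfl⟩
      exact Set.ncard_le_ncard (Set.sep_subset _ _) hfin
    obtain ⟨c, hVc, hcard⟩ := Nat.sSup_mem ⟨_, h0V⟩ hbdd
    by_cases hall : ∀ e ∈ M.E, 1 ≤ c e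
    · refine ⟨c, fun e he => ⟨hall e he, hVc.1 e he⟩, fun i => ?_⟩
      rcases Nat.eq_zero_or_pos i with rfl | hi
      · have : {e ∈ M.E | c e = 0} = ∅ := by
          ext e
          simp only [Set.mem_setOf_eq, Set.mem_empty_iff_false, iff_false, not_and]
          intro he h
          have := hall e he
          omega
        rw [this]; exact M.empty_indep
      · exact hVc.2 i hi
    · exfalso
      push_neg at hall
      obtain ⟨e₀, he₀, h1⟩ := hall
      obtain ⟨c', hV', hlt⟩ := improve hfin d hd (fun A hA => hr A hA) hVc he₀ (by omega)
      have hmem : {e ∈ M.E | 1 ≤ c' e}.ncard ∈ V := ⟨c', hV', rfl⟩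
      have hle := le_csSup hbdd hmem
      omega
end
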